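/- Let P ∈ ℝ^{n×n} be a doubly stochastic matrix, let χ ⊆ ℝ^d be a closed convex set containing 0 with Euclidean projection Π_χ, let (α_t)_{t≥1} be real numbers, and let u_{i,t} ∈ ℝ^d for i ∈ [n], t ≥ 1. Define x_{i,1} = 0, h_{i,t+1} = Σ_{j=1}^n P_{ji} x_{j,t} − α_t u_{i,t}, x_{i,t+1} = Π_χ(h_{i,t+1}), r_{i,t+1} = x_{i,t+1} − h_{i,t+1}, and θ_t = (1/n)Σ_{i=1}^n x_{i,t}. Then for every i ∈ [n] and t ≥ 1, θ_t − x_{i,t} = Σ_{k=1}^{t−1} Σ_{j=1}^n (1/n − [P^{k−1}]_{ji})·(r_{j,t−k+1} − α_{t−k} u_{j,t−k}), where [P^{k−1}]_{ji} denotes the (j,i) entry of the (k−1)-st power of P. -/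

import Mathlib

open Finset

private lemma unroll_aux {n : ℕ} (P : Matrix (Fin n) (Fin n) ℝ)
    (hrow : ∀ i, ∑ j, P i j = 1)
    (hcol : ∀ j, ∑ i, P i j = 1)
    {M : Type*} [AddCommGroup M] [Module ℝ M]
    (w x : Fin n → ℕ → M) (θ : ℕ → M)
    (hx1 : ∀ i, x i 1 = 0)
    (hstep : ∀ i : Fin n, ∀ t : ℕ, 1 ≤ t → x i (t + 1) = (∑ j, P j i • x j t) + w i t)
    (hθ : ∀ t, θ t = (n : ℝ)⁻¹ • ∑ i, x i t) :
    ∀ t : ℕ, 1 ≤ t → ∀ i : Fin n, θ t - x i t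
      = ∑ k ∈ Icc 1 (t - 1), ∑ j, ((n : ℝ)⁻¹ - (P ^ (k - 1)) j i) • w j (t - k) := by
  intro t ht
  induction t, ht using Nat.le_induction with
  | base => intro i; simp [hθ, hx1]
  | succ t ht IH =>
    intro i
    obtain ⟨s, rfl⟩ : ∃ s, t = s + 1 := ⟨t - 1, (Nat.succ_pred_eq_of_pos ht).symm⟩
    simp only [Nat.add_sub_cancel] at IH ⊢
    have hθs : θ (s + 1 + 1) = θ (s + 1) + (n : ℝ)⁻¹ • ∑ j, w j (s + 1) := by
      rw [hθ, hθ]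
      have hsum : ∑ i', x i' (s + 1 + 1) = (∑ j, x j (s + 1)) + ∑ i', w i' (s + 1) := by
        calc ∑ i', x i' (s + 1 + 1)
            = ∑ i', ((∑ j, P j i' • x j (s + 1)) + w i' (s + 1)) :=
              Finset.sum_congr rfl fun i' _ => hstep i' (s + 1) (by omega)
          _ = (∑ i', ∑ j, P j i' • x j (s + 1)) + ∑ i', w i' (s + 1) :=
              Finset.sum_add_distrib
          _ = (∑ j, (∑ i', P j i') • x j (s + 1)) + ∑ i', w i' (s + 1) := by
              rw [Finset.sum_comm]; simp [Finset.sum_smul]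
          _ = (∑ j, x j (s + 1)) + ∑ i', w i' (s + 1) := by simp [hrow]
      rw [hsum, smul_add]
    have hIH : ∀ j, θ (s + 1) - x j (s + 1)
        = ∑ k ∈ Finset.range s, ∑ m, ((n : ℝ)⁻¹ - (P ^ k) m j) • w m (s - k) := by
      intro j
      rw [IH j, ← Finset.Ico_add_one_right_eq_Icc, Finset.sum_Ico_eq_sum_range]
      refine Finset.sum_congr (by norm_num) fun k _ => ?_
      rw [show 1 + k - 1 = k from by omega, show s + 1 - (1 + k) = s - k from by omega]
    have hA : θ (s + 1) - ∑ j, P j i • x j (s + 1)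
        = ∑ j, P j i • (θ (s + 1) - x j (s + 1)) := by
      simp only [smul_sub, Finset.sum_sub_distrib, ← Finset.sum_smul, hcol i, one_smul]
    have hB : (n : ℝ)⁻¹ • (∑ j, w j (s + 1)) - w i (s + 1)
        = ∑ j, ((n : ℝ)⁻¹ - (P ^ 0) j i) • w j (s + 1) := by
      simp [pow_zero, Matrix.one_apply, sub_smul, Finset.sum_sub_distrib, Finset.smul_sum,
        ite_smul]
    have hswap : ∑ j, P j i • (∑ k ∈ Finset.range s, ∑ m, ((n : ℝ)⁻¹ - (P ^ k) m j) • w m (s - k))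
        = ∑ k ∈ Finset.range s, ∑ m, ((n : ℝ)⁻¹ - (P ^ (k + 1)) m i) • w m (s - k) := by
      simp only [Finset.smul_sum, smul_smul]
      rw [Finset.sum_comm]
      refine Finset.sum_congr rfl fun k _ => ?_
      rw [Finset.sum_comm]
      refine Finset.sum_congr rfl fun m _ => ?_
      rw [← Finset.sum_smul]
      congr 1
      have e1 : ∀ j, P j i * ((n : ℝ)⁻¹ - (P ^ k) m j)
          = P j i * (n : ℝ)⁻¹ - (P ^ k) m j * P j i := fun j => by ring
      rw [Finset.sum_congr rfl fun j _ => e1 j, Finset.sum_sub_distrib, ← Finset.sum_mul,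
        hcol i, one_mul, ← Matrix.mul_apply, ← pow_succ]
    have hrhs : (∑ k ∈ Icc 1 (s + 1), ∑ j, ((n : ℝ)⁻¹ - (P ^ (k - 1)) j i) • w j (s + 1 + 1 - k))
        = (∑ k ∈ Finset.range s, ∑ j, ((n : ℝ)⁻¹ - (P ^ (k + 1)) j i) • w j (s - k))
          + ∑ j, ((n : ℝ)⁻¹ - (P ^ 0) j i) • w j (s + 1) := by
      rw [← Finset.Ico_add_one_right_eq_Icc, Finset.sum_Ico_eq_sum_range,
        Nat.add_sub_cancel, Finset.sum_range_succ']
      congr 1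
      · refine Finset.sum_congr rfl fun k _ => ?_
        rw [show 1 + (k + 1) - 1 = k + 1 from by omega,
          show s + 1 + 1 - (1 + (k + 1)) = s - k from by omega]
    rw [hrhs, hθs, hstep i (s + 1) (by omega)]
    have : θ (s + 1) + (n : ℝ)⁻¹ • (∑ j, w j (s + 1))
          - ((∑ j, P j i • x j (s + 1)) + w i (s + 1))
        = (θ (s + 1) - ∑ j, P j i • x j (s + 1))
          + ((n : ℝ)⁻¹ • (∑ j, w j (s + 1)) - w i (s + 1)) := by abel
    rw [this, hA, hB, Finset.sum_congr rfl fun j _ => by rw [hIH j], hswap]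


/-- unrolled form of the projected perturbed consensus recursion
`h_{i,t+1} = Σ_j P_{ji} x_{j,t} - α_t u_{i,t}`, `x_{i,t+1} = Π_χ(h_{i,t+1})`,
`r_{i,t+1} = x_{i,t+1} - h_{i,t+1}`, with `x_{i,1} = 0`:
`θ_t - x_{i,t} = Σ_{k=1}^{t-1} Σ_j (1/n - [P^{k-1}]_{ji}) (r_{j,t-k+1} - α_{t-k} u_{j,t-k})`. -/
theorem stmt_19 {n d : ℕ} (P : Matrix (Fin n) (Fin n) ℝ)
    (hnonneg : ∀ i j, 0 ≤ P i j)
    (hrow : ∀ i, ∑ j, P i j = 1)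
    (hcol : ∀ j, ∑ i, P i j = 1)
    (χ : Set (EuclideanSpace ℝ (Fin d)))
    (hcl : IsClosed χ) (hconv : Convex ℝ χ) (hχ0 : (0 : EuclideanSpace ℝ (Fin d)) ∈ χ)
    (proj : EuclideanSpace ℝ (Fin d) → EuclideanSpace ℝ (Fin d))
    (hprojmem : ∀ u, proj u ∈ χ)
    (hprojclosest : ∀ u, ∀ v ∈ χ, ‖u - proj u‖ ≤ ‖u - v‖)
    (α : ℕ → ℝ)
    (u x h r : Fin n → ℕ → EuclideanSpace ℝ (Fin d))
    (θ : ℕ → EuclideanSpace ℝ (Fin d))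
    (hx1 : ∀ i, x i 1 = 0)
    (hhrec : ∀ i : Fin n, ∀ t : ℕ, 1 ≤ t →
      h i (t + 1) = (∑ j, P j i • x j t) - α t • u i t)
    (hxproj : ∀ i : Fin n, ∀ t : ℕ, 1 ≤ t → x i (t + 1) = proj (h i (t + 1)))
    (hr : ∀ i : Fin n, ∀ t : ℕ, 1 ≤ t → r i (t + 1) = x i (t + 1) - h i (t + 1))
    (hθ : ∀ t : ℕ, θ t = (n : ℝ)⁻¹ • ∑ i, x i t)
    (i : Fin n) (t : ℕ) (ht : 1 ≤ t) :
    θ t - x i t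
      = ∑ k ∈ Finset.Icc 1 (t - 1), ∑ j,
          ((n : ℝ)⁻¹ - (P ^ (k - 1)) j i) • (r j (t - k + 1) - α (t - k) • u j (t - k)) := by
  have hstep : ∀ i' : Fin n, ∀ t' : ℕ, 1 ≤ t' →
      x i' (t' + 1) = (∑ j, P j i' • x j t') + (r i' (t' + 1) - α t' • u i' t') := by
    intro i' t' ht'
    have h1 := hr i' t' ht'
    rw [hhrec i' t' ht'] at h1
    rw [h1]
    abel
  exact unroll_aux P hrow hcol (fun j m => r j (m + 1) - α m • u j m) x θ hx1 hstep hθ t ht i
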